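/- Let (X, P) solve the extremal system on [0, T] with measurable control u taking values in [−1, 1], suppose X(T) = (0, 0, 1), P(T) = λ (0, 0, 1) for some λ ∈ ℝ, and suppose the Pontryagin maximization condition holds: u(t) = sign Φ(t) whenever Φ(t) ≠ 0. Then there is no ε > 0 such that u is constantly +1 or constantly −1 on [T − ε, T]. Consequently such an extremal cannot be a finite concatenation of bang arcs on any left neighborhood of T. -/

import Mathlib

open Set

/-- Auxiliary: if `f T = 0` and `f` has negative derivative `g` on `[a,T]`,
then `f > 0` strictly before `T`. -/
lemma chain_neg_aux {a T : ℝ} (haT : a < T) (f g : ℝ → ℝ)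
    (hf : ∀ t ∈ Set.Icc a T, HasDerivWithinAt f (g t) (Set.Icc a T) t)
    (hg : ∀ t ∈ Set.Ico a T, g t < 0) (hfT : f T = 0) :
    ∀ t ∈ Set.Ico a T, 0 < f t := by
  have hcont : ContinuousOn f (Set.Icc a T) := fun t ht => (hf t ht).continuousWithinAt
  have hanti : StrictAntiOn f (Set.Icc a T) := by
    apply strictAntiOn_of_deriv_neg (convex_Icc a T) hcont
    intro x hx
    rw [interior_Icc] at hx
    have hx' : x ∈ Set.Icc a T := Set.Ioo_subset_Icc_self hx
    have hd := (hf x hx').hasDerivAt (Icc_mem_nhds hx.1 hx.2)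
    rw [hd.deriv]
    exact hg x ⟨le_of_lt hx.1, hx.2⟩
  intro t ht
  have := hanti (Set.Ico_subset_Icc_self ht) (Set.right_mem_Icc.2 (le_of_lt haT)) ht.2
  rwa [hfT] at this

/-- Auxiliary: if `f T = 0` and `f` has positive derivative `g` on `[a,T]`,
then `f < 0` strictly before `T`. -/
lemma chain_pos_aux {a T : ℝ} (haT : a < T) (f g : ℝ → ℝ)
    (hf : ∀ t ∈ Set.Icc a T, HasDerivWithinAt f (g t) (Set.Icc a T) t)
    (hg : ∀ t ∈ Set.Ico a T, 0 < g t) (hfT : f T = 0) :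
    ∀ t ∈ Set.Ico a T, f t < 0 := by
  intro t ht
  have h := chain_neg_aux haT (fun s => -f s) (fun s => -g s)
    (fun t ht => (hf t ht).neg) (fun t ht => by simpa using hg t ht) (by simp [hfT]) t ht
  simpa using h

/-- Let (X, P) solve the extremal system on [0, T] with measurable control
u taking values in [−1, 1], with X(T) = (0, 0, 1), P(T) = λ (0, 0, 1), and satisfying the
Pontryagin maximization condition u(t) = sign Φ(t) whenever Φ(t) ≠ 0.  Then there is no
ε > 0 such that u is constantly +1 or constantly −1 on [T − ε, T]: the extremal is not a
finite concatenation of bang arcs on any left neighborhood of T. -/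
theorem no_final_bang_arc
    (Δ : ℝ) (hΔ : Δ ≠ 0) (T lam : ℝ) (hT : 0 < T)
    (u x1 x2 x3 p1 p2 p3 : ℝ → ℝ)
    (hum : Measurable u)
    (hub : ∀ t ∈ Icc 0 T, u t ∈ Icc (-1 : ℝ) 1)
    (hx1 : ∀ t ∈ Icc 0 T, HasDerivWithinAt x1 (-Δ * x2 t) (Icc 0 T) t)
    (hx2 : ∀ t ∈ Icc 0 T, HasDerivWithinAt x2 (Δ * x1 t - u t * x3 t) (Icc 0 T) t)
    (hx3 : ∀ t ∈ Icc 0 T, HasDerivWithinAt x3 (u t * x2 t) (Icc 0 T) t)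
    (hp1 : ∀ t ∈ Icc 0 T, HasDerivWithinAt p1 (-Δ * p2 t + x1 t) (Icc 0 T) t)
    (hp2 : ∀ t ∈ Icc 0 T, HasDerivWithinAt p2 (Δ * p1 t - u t * p3 t) (Icc 0 T) t)
    (hp3 : ∀ t ∈ Icc 0 T, HasDerivWithinAt p3 (u t * p2 t) (Icc 0 T) t)
    (hXT : x1 T = 0 ∧ x2 T = 0 ∧ x3 T = 1)
    (hPT : p1 T = 0 ∧ p2 T = 0 ∧ p3 T = lam)
    (hmax : ∀ t ∈ Icc 0 T, p3 t * x2 t - p2 t * x3 t ≠ 0 →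
      u t = Real.sign (p3 t * x2 t - p2 t * x3 t)) :
    ¬ ∃ ε : ℝ, 0 < ε ∧ ε ≤ T ∧
      ((∀ t ∈ Icc (T - ε) T, u t = 1) ∨ (∀ t ∈ Icc (T - ε) T, u t = -1)) := by
  rintro ⟨ε, hε, hεT, hcase⟩
  obtain ⟨s, hs1, hus⟩ : ∃ s : ℝ, (s = 1 ∨ s = -1) ∧ ∀ t ∈ Icc (T - ε) T, u t = s := by
    rcases hcase with h | h
    · exact ⟨1, Or.inl rfl, h⟩
    · exact ⟨-1, Or.inr rfl, h⟩
  have hss : s * s = 1 := by rcases hs1 with h | h <;> rw [h] <;> norm_num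
  set J : Set ℝ := Icc (T - ε) T with hJdef
  have hJ : J ⊆ Icc 0 T := Icc_subset_Icc (by linarith) le_rfl
  have hTJ : T ∈ J := right_mem_Icc.2 (by linarith)
  -- restricted derivative facts with u replaced by s
  have Hx1 : ∀ t ∈ J, HasDerivWithinAt x1 (-Δ * x2 t) J t :=
    fun t ht => (hx1 t (hJ ht)).mono hJ
  have Hx2 : ∀ t ∈ J, HasDerivWithinAt x2 (Δ * x1 t - s * x3 t) J t := by
    intro t ht; have h := (hx2 t (hJ ht)).mono hJ; rwa [hus t ht] at h
  have Hx3 : ∀ t ∈ J, HasDerivWithinAt x3 (s * x2 t) J t := by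
    intro t ht; have h := (hx3 t (hJ ht)).mono hJ; rwa [hus t ht] at h
  have Hp1 : ∀ t ∈ J, HasDerivWithinAt p1 (-Δ * p2 t + x1 t) J t :=
    fun t ht => (hp1 t (hJ ht)).mono hJ
  have Hp2 : ∀ t ∈ J, HasDerivWithinAt p2 (Δ * p1 t - s * p3 t) J t := by
    intro t ht; have h := (hp2 t (hJ ht)).mono hJ; rwa [hus t ht] at h
  have Hp3 : ∀ t ∈ J, HasDerivWithinAt p3 (s * p2 t) J t := by
    intro t ht; have h := (hp3 t (hJ ht)).mono hJ; rwa [hus t ht] at h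
  -- the switching function and its successive derivatives (u ≡ s)
  set F0 : ℝ → ℝ := fun t => p3 t * x2 t - p2 t * x3 t with hF0
  set F1 : ℝ → ℝ := fun t => Δ * (p3 t * x1 t - p1 t * x3 t) with hF1
  set F2 : ℝ → ℝ := fun t =>
    Δ * (s * (p2 t * x1 t - p1 t * x2 t) - Δ * (p3 t * x2 t - p2 t * x3 t)
      - x1 t * x3 t) with hF2
  set F3 : ℝ → ℝ := fun t =>
    -(1 + Δ ^ 2) * (Δ * (p3 t * x1 t - p1 t * x3 t)) + Δ ^ 2 * x2 t * x3 t
      - 2 * s * Δ * x1 t * x2 t with hF3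
  set F4 : ℝ → ℝ := fun t =>
    -(1 + Δ ^ 2) * (Δ * (s * (p2 t * x1 t - p1 t * x2 t)
        - Δ * (p3 t * x2 t - p2 t * x3 t) - x1 t * x3 t))
      + Δ ^ 3 * x1 t * x3 t + 2 * Δ * x1 t * x3 t
      + 3 * s * Δ ^ 2 * (x2 t) ^ 2 - 2 * s * Δ ^ 2 * (x1 t) ^ 2
      - s * Δ ^ 2 * (x3 t) ^ 2 with hF4
  have D0 : ∀ t ∈ J, HasDerivWithinAt F0 (F1 t) J t := by
    intro t ht
    have h : HasDerivWithinAt F0 _ J t := ((Hp3 t ht).mul (Hx2 t ht)).sub ((Hp2 t ht).mul (Hx3 t ht))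
    convert h using 1
    simp only [hF1]; ring
  have D1 : ∀ t ∈ J, HasDerivWithinAt F1 (F2 t) J t := by
    intro t ht
    have h : HasDerivWithinAt F1 _ J t := (((Hp3 t ht).mul (Hx1 t ht)).sub ((Hp1 t ht).mul (Hx3 t ht))).const_mul Δ
    convert h using 1
    simp only [hF2]; ring
  have D2 : ∀ t ∈ J, HasDerivWithinAt F2 (F3 t) J t := by
    intro t ht
    have h := (((((Hp2 t ht).mul (Hx1 t ht)).sub ((Hp1 t ht).mul (Hx2 t ht))).const_mul s).sub
        ((((Hp3 t ht).mul (Hx2 t ht)).sub ((Hp2 t ht).mul (Hx3 t ht))).const_mul Δ)).sub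
        ((Hx1 t ht).mul (Hx3 t ht))
    have h' : HasDerivWithinAt F2 _ J t := h.const_mul Δ
    convert h' using 1
    simp only [hF3]
    linear_combination (Δ * (p3 t * x1 t - p1 t * x3 t)) * hss
  have D3 : ∀ t ∈ J, HasDerivWithinAt F3 (F4 t) J t := by
    intro t ht
    have h := (((((Hp3 t ht).mul (Hx1 t ht)).sub ((Hp1 t ht).mul (Hx3 t ht))).const_mul Δ).const_mul
        (-(1 + Δ ^ 2))).add
        ((((Hx2 t ht).mul (Hx3 t ht)).const_mul (Δ ^ 2)).sub
          (((Hx1 t ht).mul (Hx2 t ht)).const_mul (2 * s * Δ)))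
    have h' : HasDerivWithinAt F3
        (-(1 + Δ ^ 2) * (Δ * ((s * p2 t) * x1 t + p3 t * (-Δ * x2 t)
            - ((-Δ * p2 t + x1 t) * x3 t + p1 t * (s * x2 t))))
          + (Δ ^ 2 * ((Δ * x1 t - s * x3 t) * x3 t + x2 t * (s * x2 t))
            - 2 * s * Δ * ((-Δ * x2 t) * x2 t + x1 t * (Δ * x1 t - s * x3 t)))) J t := by
      refine HasDerivWithinAt.congr_of_mem h (fun y _ => ?_) ht
      simp only [hF3, Pi.add_apply, Pi.sub_apply, Pi.mul_apply]; ring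
    convert h' using 1
    simp only [hF4]
    linear_combination (-(2 * Δ * x1 t * x3 t)) * hss
  -- values at T
  obtain ⟨hx1T, hx2T, hx3T⟩ := hXT
  obtain ⟨hp1T, hp2T, hp3T⟩ := hPT
  have hF0T : F0 T = 0 := by simp [hF0, hx2T, hp2T]
  have hF1T : F1 T = 0 := by simp [hF1, hx1T, hp1T]
  have hF2T : F2 T = 0 := by simp [hF2, hx1T, hx2T, hp1T, hp2T]
  have hF3T : F3 T = 0 := by simp [hF3, hx1T, hx2T, hp1T]
  have hF4T : s * F4 T = -Δ ^ 2 := by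
    simp only [hF4, hx1T, hx2T, hx3T, hp1T, hp2T]
    linear_combination (-Δ ^ 2) * hss
  -- continuity of F4 on J
  have cx1 : ContinuousOn x1 J := fun t ht => (Hx1 t ht).continuousWithinAt
  have cx2 : ContinuousOn x2 J := fun t ht => (Hx2 t ht).continuousWithinAt
  have cx3 : ContinuousOn x3 J := fun t ht => (Hx3 t ht).continuousWithinAt
  have cp1 : ContinuousOn p1 J := fun t ht => (Hp1 t ht).continuousWithinAt
  have cp2 : ContinuousOn p2 J := fun t ht => (Hp2 t ht).continuousWithinAt
  have cp3 : ContinuousOn p3 J := fun t ht => (Hp3 t ht).continuousWithinAt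
  have cF4 : ContinuousOn (fun t => s * F4 t) J := by
    simp only [hF4]
    fun_prop
  -- find a point a < T with s * F4 < 0 on [a, T]
  have hev : ∀ᶠ t in nhdsWithin T J, s * F4 t < 0 := by
    have htd : ContinuousWithinAt (fun t => s * F4 t) J T := cF4 T hTJ
    have hneg : s * F4 T < 0 := by
      rw [hF4T]; exact neg_neg_of_pos (by positivity)
    exact htd.eventually (gt_mem_nhds hneg)
  obtain ⟨δ, hδ, hball⟩ := Metric.mem_nhdsWithin_iff.1 hev
  set a : ℝ := max (T - ε) (T - δ / 2) with ha
  have haT : a < T := by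
    apply max_lt <;> linarith
  have haJ : Icc a T ⊆ J := Icc_subset_Icc (le_max_left _ _) le_rfl
  have hIb : ∀ t ∈ Icc a T, s * F4 t < 0 := by
    intro t ht
    apply hball
    constructor
    · have h1 : T - δ / 2 ≤ a := le_max_right _ _
      have h2 : T - δ / 2 ≤ t := le_trans h1 ht.1
      simp only [Metric.mem_ball, Real.dist_eq]
      rw [abs_sub_lt_iff]
      constructor <;> linarith [ht.2]
    · exact haJ ht
  -- the chain of sign conditions
  have Dm : ∀ (f g : ℝ → ℝ), (∀ t ∈ J, HasDerivWithinAt f (g t) J t) →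
      ∀ t ∈ Icc a T, HasDerivWithinAt (fun t => s * f t) (s * g t) (Icc a T) t := by
    intro f g hfg t ht
    exact ((hfg t (haJ ht)).mono haJ).const_mul s
  have hG3 : ∀ t ∈ Ico a T, 0 < s * F3 t :=
    chain_neg_aux haT _ _ (Dm F3 F4 D3) (fun t ht => hIb t (Ico_subset_Icc_self ht))
      (by rw [hF3T, mul_zero])
  have hG2 : ∀ t ∈ Ico a T, s * F2 t < 0 :=
    chain_pos_aux haT _ _ (Dm F2 F3 D2) hG3 (by rw [hF2T, mul_zero])
  have hG1 : ∀ t ∈ Ico a T, 0 < s * F1 t :=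
    chain_neg_aux haT _ _ (Dm F1 F2 D1) hG2 (by rw [hF1T, mul_zero])
  have hG0 : ∀ t ∈ Ico a T, s * F0 t < 0 :=
    chain_pos_aux haT _ _ (Dm F0 F1 D0) hG1 (by rw [hF0T, mul_zero])
  -- contradiction at t = a
  have haI : a ∈ Ico a T := ⟨le_rfl, haT⟩
  have haIcc : a ∈ Icc 0 T := hJ (haJ ⟨le_rfl, le_of_lt haT⟩)
  have hΦ : s * F0 a < 0 := hG0 a haI
  have hua : u a = s := hus a (haJ ⟨le_rfl, le_of_lt haT⟩)
  rcases hs1 with h | h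
  · rw [h, one_mul] at hΦ
    have h2 := hmax a haIcc (ne_of_lt hΦ)
    rw [Real.sign_of_neg hΦ, hua, h] at h2
    norm_num at h2
  · rw [h] at hΦ
    have hΦ' : 0 < F0 a := by linarith
    have h2 := hmax a haIcc (ne_of_gt hΦ')
    rw [Real.sign_of_pos hΦ', hua, h] at h2
    norm_num at h2
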